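/- Let m ≥ 1 be an integer and τ₁, τ₂ > 0 with τ₁ ≠ τ₂; set L = τ₁ + τ₂. Then for every z > 0, the convolution of the two Gamma(m, τᵢ) densities satisfies ∫_0^z ( τ₁^m t^{m-1} e^{-τ₁ t}/(m-1)! ) · ( τ₂^m (z-t)^{m-1} e^{-τ₂ (z-t)}/(m-1)! ) dt = (-1)^m (τ₁ τ₂)^m ∑_{i=1}^{2} ∑_{j=1}^{m} ( C(2m-j-1, m-j) / (j-1)! ) (2τᵢ - L)^{j - 2m} z^{j-1} e^{-τᵢ z}. Equivalently, the sum of two independent Gamma random variables with common shape m and distinct rates τ₁, τ₂ has this function as its density on (0,∞). -/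

import Mathlib

open Real Finset

theorem icc_to_range (n : ℕ) (f : ℕ → ℝ) : ∑ j ∈ Finset.Icc 1 n, f j = ∑ i ∈ Finset.range n, f (1+i) := by
  rw [show Finset.Icc 1 n = (Finset.range n).map ⟨fun i => 1+i, fun a b h => by simp at h; omega⟩ by
    ext x; simp only [Finset.mem_map, Finset.mem_range, Finset.mem_Icc, Function.Embedding.coeFn_mk]
    constructor
    · rintro ⟨h1, h2⟩; exact ⟨x - 1, by omega, by show 1 + (x - 1) = x; omega⟩
    · rintro ⟨a, ha, rfl⟩; show 1 ≤ 1 + a ∧ 1 + a ≤ n; omega]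
  rw [Finset.sum_map]
  rfl




theorem key_sum (n : ℕ) (δ : ℝ) (hδ : δ ≠ 0) (t : ℝ) :
    δ * (∑ r ∈ Finset.range (n+1), ((n.factorial : ℝ)/(r.factorial : ℝ)) * t^r * δ^((r:ℤ)-n-1))
    - (∑ r ∈ Finset.range (n+1), ((n.factorial : ℝ)/(r.factorial : ℝ)) * (r * t^(r-1)) * δ^((r:ℤ)-n-1))
    = t^n := by
  rw [Finset.mul_sum]
  rw [Finset.sum_range_succ (fun r => δ * (((n.factorial : ℝ)/(r.factorial : ℝ)) * t^r * δ^((r:ℤ)-n-1)))]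
  rw [Finset.sum_range_succ' (fun r => ((n.factorial : ℝ)/(r.factorial : ℝ)) * (r * t^(r-1)) * δ^((r:ℤ)-n-1))]
  have hn : δ * (((n.factorial : ℝ)/(n.factorial : ℝ)) * t^n * δ^((n:ℤ)-n-1)) = t^n := by
    have h1 : δ * δ^((n:ℤ)-n-1) = 1 := by
      rw [← zpow_one_add₀ hδ]; norm_num
    have hf : ((n.factorial : ℝ)/(n.factorial : ℝ)) = 1 := by
      rw [div_self]; positivity
    rw [hf, one_mul, mul_comm (t^n), ← mul_assoc, h1, one_mul]
  have hsums : ∑ x ∈ Finset.range n, δ * (((n.factorial : ℝ)/(x.factorial : ℝ)) * t^x * δ^((x:ℤ)-n-1))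
      = ∑ k ∈ Finset.range n, ((n.factorial : ℝ)/((k+1).factorial : ℝ)) * ((k+1:ℕ) * t^(k+1-1)) * δ^(((k+1:ℕ):ℤ)-n-1) := by
    apply Finset.sum_congr rfl
    intro i _
    have he : (((i+1:ℕ)):ℤ) - n - 1 = 1 + ((i:ℤ)-n-1) := by push_cast; ring
    rw [he, zpow_one_add₀ hδ, show i+1-1 = i from rfl]
    have hfac : ((n.factorial:ℝ)/((i+1).factorial:ℝ)) * ((i+1:ℕ):ℝ) = (n.factorial:ℝ)/(i.factorial:ℝ) := by
      have h1 : (((i+1).factorial : ℕ) : ℝ) = ((i:ℝ)+1) * (i.factorial:ℝ) := by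
        rw [Nat.factorial_succ]; push_cast; ring
      rw [h1]
      have h2 : (i.factorial:ℝ) ≠ 0 := by positivity
      field_simp
      push_cast; ring
    linear_combination -(δ * t^i * δ^((i:ℤ)-n-1)) * hfac
  rw [hn, hsums]
  simp

theorem aux_integral (n : ℕ) (δ : ℝ) (hδ : δ ≠ 0) (z : ℝ) :
    ∫ t in (0:ℝ)..z, t^n * Real.exp (-(δ*t)) =
      (n.factorial : ℝ) * δ^(-(n:ℤ)-1) -
        Real.exp (-(δ*z)) * ∑ r ∈ Finset.range (n+1),
          ((n.factorial : ℝ)/(r.factorial : ℝ)) * z^r * δ^((r:ℤ)-n-1) := by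
  have hderiv : ∀ t : ℝ, HasDerivAt (fun t => -(Real.exp (-(δ*t)) * ∑ r ∈ Finset.range (n+1),
      ((n.factorial : ℝ)/(r.factorial : ℝ)) * t^r * δ^((r:ℤ)-n-1))) (t^n * Real.exp (-(δ*t))) t := by
    intro t
    have he : HasDerivAt (fun t : ℝ => Real.exp (-(δ*t))) (-δ * Real.exp (-(δ*t))) t := by
      have h1 : HasDerivAt (fun t : ℝ => -(δ*t)) (-δ) t := by
        simpa using ((hasDerivAt_id t).const_mul δ).fun_neg
      simpa [mul_comm] using h1.exp
    have hs : HasDerivAt (fun t : ℝ => ∑ r ∈ Finset.range (n+1),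
        ((n.factorial : ℝ)/(r.factorial : ℝ)) * t^r * δ^((r:ℤ)-n-1))
        (∑ r ∈ Finset.range (n+1),
        ((n.factorial : ℝ)/(r.factorial : ℝ)) * (r * t^(r-1)) * δ^((r:ℤ)-n-1)) t := by
      apply HasDerivAt.fun_sum
      intro r _
      have := (hasDerivAt_pow r t).const_mul ((n.factorial : ℝ)/(r.factorial : ℝ))
      simpa [mul_assoc, mul_comm, mul_left_comm] using this.mul_const (δ^((r:ℤ)-n-1))
    have hkey := key_sum n δ hδ t
    have := (he.fun_mul hs).fun_neg
    refine this.congr_deriv ?_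
    set S1 := ∑ r ∈ Finset.range (n+1), ((n.factorial : ℝ)/(r.factorial : ℝ)) * t^r * δ^((r:ℤ)-n-1)
    set S2 := ∑ r ∈ Finset.range (n+1), ((n.factorial : ℝ)/(r.factorial : ℝ)) * (r * t^(r-1)) * δ^((r:ℤ)-n-1)
    have : t^n = δ * S1 - S2 := hkey.symm
    rw [mul_comm (t^n), this]
    ring
  have hint : IntervalIntegrable (fun t => t^n * Real.exp (-(δ*t))) MeasureTheory.volume 0 z := by
    apply Continuous.intervalIntegrable
    continuity
  rw [intervalIntegral.integral_eq_sub_of_hasDerivAt (fun t _ => hderiv t) hint]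
  have h0 : ∀ r ∈ Finset.range (n+1), ((n.factorial : ℝ)/(r.factorial : ℝ)) * (0:ℝ)^r * δ^((r:ℤ)-n-1)
      = if r = 0 then (n.factorial : ℝ) * δ^(-(n:ℤ)-1) else 0 := by
    intro r _
    rcases Nat.eq_zero_or_pos r with h | h
    · subst h; simp [zero_pow]
    · rw [if_neg (by omega), zero_pow (by omega), mul_zero, zero_mul]
  rw [Finset.sum_congr rfl h0, Finset.sum_ite_eq' (Finset.range (n+1)) 0 (fun _ => (n.factorial : ℝ) * δ^(-(n:ℤ)-1))]
  simp only [Finset.mem_range, Nat.zero_lt_succ, if_true]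
  simp only [mul_zero, neg_zero, Real.exp_zero, one_mul]
  ring



theorem aux_comb (n : ℕ) : ∀ (x j : ℕ),
    ∑ k ∈ Finset.range (n+1), (-1:ℤ)^k * (n.choose k) * ((x+k).choose j)
      = (-1:ℤ)^n * (if n ≤ j then ((x.choose (j-n) : ℤ)) else 0) := by
  induction n with
  | zero => intro x j; simp
  | succ n ih =>
    intro x j
    have hrec : ∑ k ∈ Finset.range (n+2), (-1:ℤ)^k * ((n+1).choose k) * ((x+k).choose j)
        = (∑ k ∈ Finset.range (n+1), (-1:ℤ)^k * (n.choose k) * ((x+k).choose j))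
          - (∑ k ∈ Finset.range (n+1), (-1:ℤ)^k * (n.choose k) * ((x+1+k).choose j)) := by
      rw [Finset.sum_range_succ' (fun k => (-1:ℤ)^k * ((n+1).choose k) * ((x+k).choose j))]
      have hterm : ∀ i, (-1:ℤ)^(i+1) * ((n+1).choose (i+1)) * ((x+(i+1)).choose j)
          = -((-1:ℤ)^i * (n.choose i) * ((x+1+i).choose j))
            - ((-1:ℤ)^i * (n.choose (i+1)) * ((x+1+i).choose j)) := by
        intro i
        rw [Nat.choose_succ_succ]
        have : x + (i+1) = x + 1 + i := by omega
        rw [this]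
        push_cast
        ring
      rw [Finset.sum_congr rfl (fun i _ => hterm i)]
      rw [Finset.sum_sub_distrib]
      have hT : ∑ i ∈ Finset.range (n+1), ((-1:ℤ)^i * (n.choose (i+1)) * ((x+1+i).choose j))
          = (x.choose j : ℤ) - ∑ k ∈ Finset.range (n+1), (-1:ℤ)^k * (n.choose k) * ((x+k).choose j) := by
        rw [Finset.sum_range_succ' (fun k => (-1:ℤ)^k * (n.choose k) * ((x+k).choose j))]
        rw [Finset.sum_range_succ (fun i => ((-1:ℤ)^i * (n.choose (i+1)) * ((x+1+i).choose j)))]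
        simp only [Nat.choose_succ_self, Nat.cast_zero, mul_zero, zero_mul, add_zero,
          Nat.choose_zero_right, Nat.cast_one, pow_zero, one_mul, mul_one, add_zero]
        have : ∀ i ∈ Finset.range n, (-1:ℤ)^(i+1) * (n.choose (i+1)) * ((x+(i+1)).choose j)
            = -((-1:ℤ)^i * (n.choose (i+1)) * ((x+1+i).choose j)) := by
          intro i _
          have : x + (i+1) = x + 1 + i := by omega
          rw [this]; push_cast; ring
        rw [Finset.sum_congr rfl this, Finset.sum_neg_distrib]
        ring
      rw [Finset.sum_neg_distrib, hT]
      simp only [Nat.choose_zero_right, Nat.cast_one, add_zero, one_mul, mul_one]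
      ring
    rw [hrec, ih x j, ih (x+1) j]
    by_cases h : n + 1 ≤ j
    · rw [if_pos h, if_pos (by omega), if_pos (by omega)]
      have hj : j - n = (j - (n+1)) + 1 := by omega
      rw [hj, Nat.choose_succ_succ (x) (j - (n+1))]
      push_cast
      ring
    · by_cases h2 : n ≤ j
      · -- j = n
        have hj : j = n := by omega
        rw [if_pos h2, if_pos h2, if_neg h]
        subst hj
        simp
      · rw [if_neg h2, if_neg h2, if_neg h]
        ring


theorem fact1 (n p : ℕ) (hp : p ≤ n) :
    (2*n-p).factorial * n.choose p * p.factorial = n.factorial * n.factorial * ((2*n-p).choose (n-p)) := by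
  have h1 : n.choose p * p.factorial * (n-p).factorial = n.factorial := Nat.choose_mul_factorial_mul_factorial hp
  have h2 : (2*n-p).choose (n-p) * (n-p).factorial * (2*n-p-(n-p)).factorial = (2*n-p).factorial :=
    Nat.choose_mul_factorial_mul_factorial (by omega)
  have h3 : 2*n-p-(n-p) = n := by omega
  rw [h3] at h2
  have hpos : 0 < (n-p).factorial := Nat.factorial_pos _
  apply Nat.eq_of_mul_eq_mul_right hpos
  calc (2*n-p).factorial * n.choose p * p.factorial * (n-p).factorial
      = (2*n-p).factorial * (n.choose p * p.factorial * (n-p).factorial) := by ring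
    _ = (2*n-p).factorial * n.factorial := by rw [h1]
    _ = ((2*n-p).choose (n-p) * (n-p).factorial * n.factorial) * n.factorial := by rw [h2]
    _ = n.factorial * n.factorial * ((2*n-p).choose (n-p)) * (n-p).factorial := by ring

theorem fact2 (n k : ℕ) (hk : k ≤ n) :
    n.choose k * (n+k).factorial * (n-k).factorial = n.factorial * n.factorial * ((n+k).choose k) := by
  have h1 : n.choose k * k.factorial * (n-k).factorial = n.factorial := Nat.choose_mul_factorial_mul_factorial hk
  have h2 : (n+k).choose k * k.factorial * (n+k-k).factorial = (n+k).factorial :=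
    Nat.choose_mul_factorial_mul_factorial (by omega)
  have h3 : n+k-k = n := by omega
  rw [h3] at h2
  have hpos : 0 < k.factorial := Nat.factorial_pos _
  apply Nat.eq_of_mul_eq_mul_right hpos
  calc n.choose k * (n+k).factorial * (n-k).factorial * k.factorial
      = (n.choose k * k.factorial * (n-k).factorial) * (n+k).factorial := by ring
    _ = n.factorial * ((n+k).choose k * k.factorial * n.factorial) := by rw [h1, h2]
    _ = n.factorial * n.factorial * ((n+k).choose k) * k.factorial := by ring



theorem aux_inner (n k : ℕ) (hk : k ≤ n) (z δ : ℝ) :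
    z^(n-k) * ∑ r ∈ Finset.range (n+k+1), (((n+k).factorial : ℝ)/(r.factorial:ℝ)) * z^r * δ^((r:ℤ)-(n+k)-1)
    = ∑ p ∈ Finset.range (2*n+1), (((n+k).choose (2*n-p) : ℝ) * ((2*n-p).factorial : ℝ)) * z^p * δ^((p:ℤ)-2*n-1) := by
  conv_rhs => rw [show 2*n+1 = (n-k)+(n+k+1) by omega, Finset.sum_range_add]
  have hzero : ∀ p ∈ Finset.range (n-k), (((n+k).choose (2*n-p) : ℝ) * ((2*n-p).factorial : ℝ)) * z^p * δ^((p:ℤ)-2*n-1) = 0 := by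
    intro p hp
    rw [Finset.mem_range] at hp
    rw [Nat.choose_eq_zero_of_lt (by omega)]
    simp
  rw [Finset.sum_congr rfl hzero, Finset.sum_const_zero, zero_add]
  rw [Finset.mul_sum]
  apply Finset.sum_congr rfl
  intro r hr
  rw [Finset.mem_range] at hr
  have hr' : r ≤ n + k := by omega
  have h1 : 2*n - (n-k+r) = n+k-r := by omega
  have h2 : (n+k).choose (n+k-r) = (n+k).choose r := Nat.choose_symm hr'
  have h3 : (((n+k).factorial : ℝ)/(r.factorial:ℝ)) = ((n+k).choose r : ℝ) * ((n+k-r).factorial : ℝ) := by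
    have := Nat.choose_mul_factorial_mul_factorial hr'
    field_simp
    push_cast [← this]
    ring
  have h4 : (((n-k+r:ℕ)):ℤ) - 2*n - 1 = (r:ℤ) - (n+k) - 1 := by
    push_cast [Nat.cast_sub hk]
    ring
  rw [h1, h2, h3, h4, pow_add]
  ring
theorem lhs_norm (n : ℕ) (τ₁ τ₂ z : ℝ) (δ : ℝ) (hδdef : δ = τ₁ - τ₂) (hδ : δ ≠ 0) :
    ∫ t in (0:ℝ)..z,
        (τ₁ ^ (n+1) * t ^ n * Real.exp (-(τ₁ * t)) / (n.factorial : ℝ)) *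
        (τ₂ ^ (n+1) * (z - t) ^ n * Real.exp (-(τ₂ * (z - t))) / (n.factorial : ℝ))
    = (τ₁^(n+1)*τ₂^(n+1)/((n.factorial:ℝ)*(n.factorial:ℝ))) * Real.exp (-(τ₂*z)) *
      ( (∑ k ∈ Finset.range (n+1), ((n.choose k : ℝ) * (-1)^k * z^(n-k)) * (((n+k).factorial:ℝ) * δ^(-(n:ℤ)-(k:ℤ)-1)))
        - Real.exp (-(δ*z)) * ((-1:ℝ)^n * ∑ p ∈ Finset.range (n+1),
            (n.choose (n-p) : ℝ) * ((2*n-p).factorial:ℝ) * z^p * δ^((p:ℤ)-2*n-1)) ) := by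
  set C : ℝ := τ₁^(n+1)*τ₂^(n+1)/((n.factorial:ℝ)*(n.factorial:ℝ)) * Real.exp (-(τ₂*z)) with hC
  have step1 : ∫ t in (0:ℝ)..z,
        (τ₁ ^ (n+1) * t ^ n * Real.exp (-(τ₁ * t)) / (n.factorial : ℝ)) *
        (τ₂ ^ (n+1) * (z - t) ^ n * Real.exp (-(τ₂ * (z - t))) / (n.factorial : ℝ))
      = C * ∫ t in (0:ℝ)..z, t^n * (z-t)^n * Real.exp (-(δ*t)) := by
    rw [← intervalIntegral.integral_const_mul]
    apply intervalIntegral.integral_congr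
    intro t _
    have hexp : Real.exp (-(τ₁*t)) * Real.exp (-(τ₂*(z-t))) = Real.exp (-(δ*t)) * Real.exp (-(τ₂*z)) := by
      rw [← Real.exp_add, ← Real.exp_add, hδdef]
      ring_nf
    simp only [hC]
    linear_combination (τ₁^(n+1) * t^n * τ₂^(n+1) * (z-t)^n / ((n.factorial:ℝ)*(n.factorial:ℝ))) * hexp
  rw [step1]
  congr 1
  -- expand (z-t)^n
  have step2 : ∫ t in (0:ℝ)..z, t^n * (z-t)^n * Real.exp (-(δ*t))
      = ∑ k ∈ Finset.range (n+1), ((n.choose k : ℝ) * (-1)^k * z^(n-k)) * ∫ t in (0:ℝ)..z, t^(n+k) * Real.exp (-(δ*t)) := by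
    have heq : ∀ t : ℝ, t^n * (z-t)^n * Real.exp (-(δ*t))
        = ∑ k ∈ Finset.range (n+1), ((n.choose k : ℝ) * (-1)^k * z^(n-k)) * (t^(n+k) * Real.exp (-(δ*t))) := by
      intro t
      have hbin : (z - t)^n = ∑ k ∈ Finset.range (n+1), (-t)^k * z^(n-k) * (n.choose k : ℝ) := by
        rw [show z - t = -t + z by ring]
        exact add_pow (-t) z n
      rw [hbin, Finset.mul_sum, Finset.sum_mul]
      apply Finset.sum_congr rfl
      intro k _
      rw [neg_pow, pow_add]
      ring
    rw [intervalIntegral.integral_congr (fun t _ => heq t)]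
    rw [intervalIntegral.integral_finset_sum]
    · apply Finset.sum_congr rfl
      intro k _
      rw [intervalIntegral.integral_const_mul]
    · intro k _
      apply Continuous.intervalIntegrable
      continuity
  rw [step2]
  have step3 : ∀ k ∈ Finset.range (n+1),
      ((n.choose k : ℝ) * (-1)^k * z^(n-k)) * ∫ t in (0:ℝ)..z, t^(n+k) * Real.exp (-(δ*t))
      = ((n.choose k : ℝ) * (-1)^k * z^(n-k)) * (((n+k).factorial:ℝ) * δ^(-(n:ℤ)-(k:ℤ)-1))
        - Real.exp (-(δ*z)) * (((n.choose k : ℝ) * (-1)^k) *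
            ∑ p ∈ Finset.range (2*n+1), (((n+k).choose (2*n-p) : ℝ) * ((2*n-p).factorial : ℝ)) * z^p * δ^((p:ℤ)-2*n-1)) := by
    intro k hk
    rw [Finset.mem_range] at hk
    rw [aux_integral (n+k) δ hδ z]
    rw [show (-(((n+k:ℕ)):ℤ)-1) = -(n:ℤ)-(k:ℤ)-1 by push_cast; ring]
    rw [mul_sub]
    congr 1
    rw [← aux_inner n k (by omega) z δ]
    have : ∀ r ∈ Finset.range (n+k+1), (((n+k).factorial : ℝ)/(r.factorial:ℝ)) * z^r * δ^((r:ℤ)-((n+k:ℕ):ℤ)-1)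
        = (((n+k).factorial : ℝ)/(r.factorial:ℝ)) * z^r * δ^((r:ℤ)-(n+k)-1) := by
      intro r _
      norm_num
    rw [Finset.sum_congr rfl this]
    ring
  rw [Finset.sum_congr rfl step3, Finset.sum_sub_distrib]
  congr 1
  rw [← Finset.mul_sum]
  congr 1
  have hps : ∀ p ∈ Finset.range (2*n+1),
      ∑ k ∈ Finset.range (n+1), ((n.choose k:ℝ)*(-1)^k) * ((((n+k).choose (2*n-p):ℝ) * ((2*n-p).factorial:ℝ)) * z^p * δ^((p:ℤ)-2*n-1))
      = (if p ≤ n then (-1:ℝ)^n * (((n.choose (n-p)):ℝ) * ((2*n-p).factorial:ℝ) * z^p * δ^((p:ℤ)-2*n-1)) else 0) := by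
    intro p hp
    rw [Finset.mem_range] at hp
    have hterm : ∀ k ∈ Finset.range (n+1), ((n.choose k:ℝ)*(-1)^k) * ((((n+k).choose (2*n-p):ℝ) * ((2*n-p).factorial:ℝ)) * z^p * δ^((p:ℤ)-2*n-1))
        = ((-1:ℝ)^k * (n.choose k:ℝ) * (((n+k).choose (2*n-p)):ℝ)) * (((2*n-p).factorial:ℝ) * z^p * δ^((p:ℤ)-2*n-1)) := by
      intro k _
      ring
    rw [Finset.sum_congr rfl hterm, ← Finset.sum_mul]
    have hcomb := congrArg (Int.cast : ℤ → ℝ) (aux_comb n n (2*n-p))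
    push_cast at hcomb
    rw [hcomb]
    by_cases hpn : p ≤ n
    · rw [if_pos (by omega : n ≤ 2*n-p), if_pos hpn, show 2*n-p-n = n-p by omega]
      ring
    · rw [if_neg (by omega : ¬ (n ≤ 2*n-p)), if_neg hpn]
      simp
  have hcomm : ∑ k ∈ Finset.range (n+1), ((n.choose k:ℝ)*(-1)^k) *
      (∑ p ∈ Finset.range (2*n+1), (((n+k).choose (2*n-p) : ℝ) * ((2*n-p).factorial : ℝ)) * z^p * δ^((p:ℤ)-2*n-1))
      = ∑ p ∈ Finset.range (2*n+1), ∑ k ∈ Finset.range (n+1), ((n.choose k:ℝ)*(-1)^k) * ((((n+k).choose (2*n-p):ℝ) * ((2*n-p).factorial:ℝ)) * z^p * δ^((p:ℤ)-2*n-1)) := by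
    rw [Finset.sum_comm]
    apply Finset.sum_congr rfl
    intro k _
    rw [Finset.mul_sum]
  rw [hcomm, Finset.sum_congr rfl hps]
  rw [← Finset.sum_subset (Finset.range_subset_range.mpr (by omega : n+1 ≤ 2*n+1))
      (fun x hx hnx => if_neg (by simp only [Finset.mem_range] at hnx; omega))]
  rw [Finset.mul_sum]
  apply Finset.sum_congr rfl
  intro p hp
  rw [Finset.mem_range] at hp
  rw [if_pos (by omega : p ≤ n)]
theorem rhs_norm (n : ℕ) (τ₁ τ₂ : ℝ) (hτ₁ : 0 < τ₁) (hτ₂ : 0 < τ₂) (hne : τ₁ ≠ τ₂)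
    (L : ℝ) (hL : L = τ₁ + τ₂) (z : ℝ) (hz : 0 < z)
    (δ : ℝ) (hδdef : δ = τ₁ - τ₂) (hδ : δ ≠ 0) :
    (-1 : ℝ) ^ (n+1) * (τ₁ * τ₂) ^ (n+1) *
          ∑ τ ∈ ({τ₁, τ₂} : Finset ℝ), ∑ j ∈ Finset.Icc 1 (n+1),
            (((2 * (n+1) - j - 1).choose ((n+1) - j) : ℝ) / ((j - 1).factorial : ℝ)) *
              (2 * τ - L) ^ ((j : ℤ) - 2 * ((n+1 : ℕ) : ℤ)) * z ^ (j - 1) * Real.exp (-(τ * z))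
    = (τ₁*τ₂)^(n+1) * ((-1:ℝ)^(n+1) *
        (∑ p ∈ Finset.range (n+1), (((2*n-p).choose (n-p) : ℝ)/(p.factorial:ℝ)) * δ^((p:ℤ)-2*(n:ℤ)-1) * z^p) * Real.exp (-(τ₁*z))
      + (∑ k ∈ Finset.range (n+1), (-1:ℝ)^k * (((n+k).choose k : ℝ)/((n-k).factorial:ℝ)) * δ^(-(n:ℤ)-(k:ℤ)-1) * z^(n-k)) * Real.exp (-(τ₂*z))) := by
  rw [Finset.sum_pair hne]
  have h1 : (2 * τ₁ - L) = δ := by rw [hL, hδdef]; ring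
  have h2 : (2 * τ₂ - L) = -δ := by rw [hL, hδdef]; ring
  rw [h1, h2]
  rw [icc_to_range (n+1) (fun j => (((2 * (n+1) - j - 1).choose ((n+1) - j) : ℝ) / ((j - 1).factorial : ℝ)) *
              δ ^ ((j : ℤ) - 2 * ((n+1 : ℕ) : ℤ)) * z ^ (j - 1) * Real.exp (-(τ₁ * z)))]
  rw [icc_to_range (n+1) (fun j => (((2 * (n+1) - j - 1).choose ((n+1) - j) : ℝ) / ((j - 1).factorial : ℝ)) *
              (-δ) ^ ((j : ℤ) - 2 * ((n+1 : ℕ) : ℤ)) * z ^ (j - 1) * Real.exp (-(τ₂ * z)))]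
  have hs1 : ∀ p ∈ Finset.range (n+1),
      (((2 * (n+1) - (1+p) - 1).choose ((n+1) - (1+p)) : ℝ) / (((1+p) - 1).factorial : ℝ)) *
              δ ^ (((1+p : ℕ) : ℤ) - 2 * ((n+1 : ℕ) : ℤ)) * z ^ ((1+p) - 1) * Real.exp (-(τ₁ * z))
      = ((((2*n-p).choose (n-p) : ℝ)/(p.factorial:ℝ)) * δ^((p:ℤ)-2*(n:ℤ)-1) * z^p) * Real.exp (-(τ₁*z)) := by
    intro p hp
    rw [Finset.mem_range] at hp
    have e1 : 2 * (n+1) - (1+p) - 1 = 2*n - p := by omega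
    have e2 : (n+1) - (1+p) = n - p := by omega
    have e3 : (1+p) - 1 = p := by omega
    have e4 : ((1+p : ℕ) : ℤ) - 2 * ((n+1 : ℕ) : ℤ) = (p:ℤ)-2*(n:ℤ)-1 := by push_cast; ring
    rw [e1, e2, e3, e4]
  have hs2 : ∀ i ∈ Finset.range (n+1),
      (((2 * (n+1) - (1+i) - 1).choose ((n+1) - (1+i)) : ℝ) / (((1+i) - 1).factorial : ℝ)) *
              (-δ) ^ (((1+i : ℕ) : ℤ) - 2 * ((n+1 : ℕ) : ℤ)) * z ^ ((1+i) - 1) * Real.exp (-(τ₂ * z))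
      = ((((2*n-i).choose (n-i) : ℝ)/(i.factorial:ℝ)) * (-1:ℝ)^(i+1) * δ^((i:ℤ)-2*(n:ℤ)-1) * z^i) * Real.exp (-(τ₂*z)) := by
    intro i hi
    rw [Finset.mem_range] at hi
    have e1 : 2 * (n+1) - (1+i) - 1 = 2*n - i := by omega
    have e2 : (n+1) - (1+i) = n - i := by omega
    have e3 : (1+i) - 1 = i := by omega
    have e4 : ((1+i : ℕ) : ℤ) - 2 * ((n+1 : ℕ) : ℤ) = (i:ℤ)-2*(n:ℤ)-1 := by push_cast; ring
    have e5 : (-δ) ^ ((i:ℤ)-2*(n:ℤ)-1) = (-1:ℝ)^(i+1) * δ^((i:ℤ)-2*(n:ℤ)-1) := by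
      rw [show (-δ) = (-1) * δ by ring, mul_zpow]
      congr 1
      rw [show ((i:ℤ)-2*(n:ℤ)-1) = (i:ℤ) + (-2*(n:ℤ)-1) by ring]
      rw [zpow_add₀ (by norm_num : (-1:ℝ) ≠ 0)]
      rw [zpow_natCast]
      have : (-1:ℝ) ^ (-2*(n:ℤ)-1) = -1 := by
        rw [show (-2*(n:ℤ)-1) = -(2*(n:ℤ)+1) by ring, zpow_neg]
        rw [show (2*(n:ℤ)+1) = ((2*n+1 : ℕ) : ℤ) by push_cast; ring, zpow_natCast]
        rw [pow_succ, pow_mul]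
        norm_num
      rw [this, pow_add]
      ring
    rw [e1, e2, e3, e4, e5]
    ring
  rw [Finset.sum_congr rfl hs1, Finset.sum_congr rfl hs2]
  rw [← Finset.sum_mul, ← Finset.sum_mul]
  -- reflect the second sum
  rw [show ∑ i ∈ Finset.range (n+1), ((((2*n-i).choose (n-i) : ℝ)/(i.factorial:ℝ)) * (-1:ℝ)^(i+1) * δ^((i:ℤ)-2*(n:ℤ)-1) * z^i)
      = ∑ k ∈ Finset.range (n+1), ((((2*n-(n-k)).choose (n-(n-k)) : ℝ)/((n-k).factorial:ℝ)) * (-1:ℝ)^((n-k)+1) * δ^(((n-k:ℕ):ℤ)-2*(n:ℤ)-1) * z^(n-k)) from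
    (Finset.sum_range_reflect (fun i => ((((2*n-i).choose (n-i) : ℝ)/(i.factorial:ℝ)) * (-1:ℝ)^(i+1) * δ^((i:ℤ)-2*(n:ℤ)-1) * z^i)) (n+1)).symm]
  have hS2' : (-1:ℝ)^(n+1) * ∑ k ∈ Finset.range (n+1), ((((2*n-(n-k)).choose (n-(n-k)) : ℝ)/((n-k).factorial:ℝ)) * (-1:ℝ)^((n-k)+1) * δ^(((n-k:ℕ):ℤ)-2*(n:ℤ)-1) * z^(n-k))
      = ∑ k ∈ Finset.range (n+1), (-1:ℝ)^k * (((n+k).choose k : ℝ)/((n-k).factorial:ℝ)) * δ^(-(n:ℤ)-(k:ℤ)-1) * z^(n-k) := by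
    rw [Finset.mul_sum]
    apply Finset.sum_congr rfl
    intro k hk
    rw [Finset.mem_range] at hk
    have hk' : k ≤ n := by omega
    rw [show 2*n-(n-k) = n+k by omega, show n-(n-k) = k by omega]
    rw [show ((n-k:ℕ):ℤ) - 2*(n:ℤ) - 1 = -(n:ℤ)-(k:ℤ)-1 by omega]
    have esign : (-1:ℝ)^(n+1) * (-1:ℝ)^((n-k)+1) = (-1:ℝ)^k := by
      rw [← pow_add, show (n+1)+((n-k)+1) = k + 2*(n-k+1) by omega, pow_add, pow_mul]
      norm_num
    calc (-1:ℝ)^(n+1) * ((((n+k).choose k : ℝ)/((n-k).factorial:ℝ)) * (-1:ℝ)^((n-k)+1) * δ^(-(n:ℤ)-(k:ℤ)-1) * z^(n-k))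
        = ((-1:ℝ)^(n+1) * (-1:ℝ)^((n-k)+1)) * ((((n+k).choose k : ℝ)/((n-k).factorial:ℝ)) * δ^(-(n:ℤ)-(k:ℤ)-1) * z^(n-k)) := by ring
      _ = (-1:ℝ)^k * (((n+k).choose k : ℝ)/((n-k).factorial:ℝ)) * δ^(-(n:ℤ)-(k:ℤ)-1) * z^(n-k) := by rw [esign]; ring
  linear_combination (Real.exp (-(τ₂*z)) * (τ₁*τ₂)^(n+1)) * hS2'

theorem gamma_convolution_distinct_rates (m : ℕ) (hm : 1 ≤ m)
    (τ₁ τ₂ : ℝ) (hτ₁ : 0 < τ₁) (hτ₂ : 0 < τ₂) (hne : τ₁ ≠ τ₂)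
    (L : ℝ) (hL : L = τ₁ + τ₂) :
    ∀ z : ℝ, 0 < z →
      ∫ t in (0 : ℝ)..z,
          (τ₁ ^ m * t ^ (m - 1) * Real.exp (-(τ₁ * t)) / ((m - 1).factorial : ℝ)) *
          (τ₂ ^ m * (z - t) ^ (m - 1) * Real.exp (-(τ₂ * (z - t))) / ((m - 1).factorial : ℝ)) =
        (-1 : ℝ) ^ m * (τ₁ * τ₂) ^ m *
          ∑ τ ∈ ({τ₁, τ₂} : Finset ℝ), ∑ j ∈ Finset.Icc 1 m,
            (((2 * m - j - 1).choose (m - j) : ℝ) / ((j - 1).factorial : ℝ)) *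
              (2 * τ - L) ^ ((j : ℤ) - 2 * (m : ℤ)) * z ^ (j - 1) * Real.exp (-(τ * z)) := by
  intro z hz
  obtain ⟨n, rfl⟩ : ∃ n, m = n + 1 := ⟨m - 1, by omega⟩
  simp only [Nat.add_sub_cancel]
  have hδ : τ₁ - τ₂ ≠ 0 := sub_ne_zero.mpr hne
  rw [lhs_norm n τ₁ τ₂ z (τ₁ - τ₂) rfl hδ]
  rw [rhs_norm n τ₁ τ₂ hτ₁ hτ₂ hne L hL z hz (τ₁ - τ₂) rfl hδ]
  set δ : ℝ := τ₁ - τ₂ with hδdef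
  set N : ℝ := (n.factorial:ℝ)*(n.factorial:ℝ) with hN
  have hNpos : (0:ℝ) < N := by positivity
  have h1 : ∑ k ∈ Finset.range (n+1), ((n.choose k : ℝ) * (-1)^k * z^(n-k)) * (((n+k).factorial:ℝ) * δ^(-(n:ℤ)-(k:ℤ)-1))
      = N * ∑ k ∈ Finset.range (n+1), (-1:ℝ)^k * (((n+k).choose k : ℝ)/((n-k).factorial:ℝ)) * δ^(-(n:ℤ)-(k:ℤ)-1) * z^(n-k) := by
    rw [Finset.mul_sum]
    apply Finset.sum_congr rfl
    intro k hk
    rw [Finset.mem_range] at hk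
    have hc := congrArg (Nat.cast : ℕ → ℝ) (fact2 n k (by omega))
    push_cast at hc
    have hfk : ((n-k).factorial : ℝ) ≠ 0 := by positivity
    field_simp
    linear_combination hc
  have h2 : ∑ p ∈ Finset.range (n+1), (n.choose (n-p) : ℝ) * ((2*n-p).factorial:ℝ) * z^p * δ^((p:ℤ)-2*n-1)
      = N * ∑ p ∈ Finset.range (n+1), (((2*n-p).choose (n-p) : ℝ)/(p.factorial:ℝ)) * δ^((p:ℤ)-2*(n:ℤ)-1) * z^p := by
    rw [Finset.mul_sum]
    apply Finset.sum_congr rfl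
    intro p hp
    rw [Finset.mem_range] at hp
    have hsym : n.choose (n-p) = n.choose p := Nat.choose_symm (by omega)
    have hc := congrArg (Nat.cast : ℕ → ℝ) (fact1 n p (by omega))
    push_cast at hc
    rw [hsym]
    have hfp : (p.factorial : ℝ) ≠ 0 := by positivity
    field_simp
    linear_combination hc
  have hfe : Real.exp (-(τ₂*z)) * Real.exp (-(δ*z)) = Real.exp (-(τ₁*z)) := by
    rw [← Real.exp_add, hδdef]
    ring_nf
  rw [h1, h2, ← hfe]
  have hNne : N ≠ 0 := ne_of_gt hNpos
  field_simp
  ring
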